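/- For every real k > 0, the ratio ∏_{j=1}^{N} Γ(j)Γ(j+2k)/Γ(j+k)² divided by N^{k²} converges as N → ∞ to G(1+k)²/G(1+2k), where G is the Barnes G-function. -/

import Mathlib

open Filter

/-- The Barnes G-function, defined by its Weierstrass product:
`G(1+z) = (2π)^{z/2} exp(−(z+z²(1+γ))/2) ∏_{n≥1} (1+z/n)^n e^{−z+z²/(2n)}`. -/
noncomputable def BarnesG (w : ℝ) : ℝ :=
  (2 * Real.pi) ^ ((w - 1) / 2) *
    Real.exp (-((w - 1) + (w - 1) ^ 2 * (1 + Real.eulerMascheroniConstant)) / 2) *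
    ∏' n : ℕ,
      ((1 + (w - 1) / (n + 1)) ^ (n + 1) *
        Real.exp (-(w - 1) + (w - 1) ^ 2 / (2 * (n + 1))))

open Real Finset Topology


namespace BGaux

lemma mono_aux {f f' : ℝ → ℝ}
    (hd : ∀ x : ℝ, 0 ≤ x → HasDerivAt f (f' x) x)
    (h0 : ∀ x : ℝ, 0 < x → 0 ≤ f' x) {x : ℝ} (hx : 0 ≤ x) : f 0 ≤ f x := by
  have hm : MonotoneOn f (Set.Ici (0:ℝ)) := by
    apply monotoneOn_of_deriv_nonneg (convex_Ici 0)
    · exact fun y hy => (hd y hy).continuousAt.continuousWithinAt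
    · intro y hy
      rw [interior_Ici] at hy
      exact ((hd y (le_of_lt hy)).differentiableAt).differentiableWithinAt
    · intro y hy
      rw [interior_Ici] at hy
      rw [(hd y hy.le).deriv]
      exact h0 y hy
  exact hm Set.self_mem_Ici hx hx

lemma hd_log2 (y : ℝ) (hy : 0 ≤ y) :
    HasDerivAt (fun x : ℝ => Real.log (1 + 2*x)) (2/(1+2*y)) y := by
  have h1 : (0:ℝ) < 1 + 2*y := by linarith
  have d1 : HasDerivAt (fun x : ℝ => 1 + 2*x) 2 y := by
    simpa using ((hasDerivAt_id y).const_mul 2).const_add 1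
  simpa using d1.log h1.ne'

lemma hd_log1 (y : ℝ) (hy : 0 ≤ y) :
    HasDerivAt (fun x : ℝ => Real.log (1 + x)) (1/(1+y)) y := by
  have h1 : (0:ℝ) < 1 + y := by linarith
  have d1 : HasDerivAt (fun x : ℝ => 1 + x) 1 y := by
    simpa using (hasDerivAt_id y).const_add 1
  simpa using d1.log h1.ne'

lemma hd_sq (y : ℝ) : HasDerivAt (fun x : ℝ => x^2) (2*y) y := by
  simpa using hasDerivAt_pow 2 y

lemma hd_cube (y : ℝ) : HasDerivAt (fun x : ℝ => x^3) (3*y^2) y := by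
  simpa using hasDerivAt_pow 3 y

lemma hd_quart (y : ℝ) : HasDerivAt (fun x : ℝ => x^4) (4*y^3) y := by
  simpa using hasDerivAt_pow 4 y

lemma phi_lower {x : ℝ} (hx : 0 ≤ x) :
    -x^2 ≤ Real.log (1 + 2*x) - 2 * Real.log (1 + x) := by
  have key := mono_aux (f := fun x : ℝ => Real.log (1+2*x) - 2*Real.log (1+x) + x^2)
    (f' := fun y => 2/(1+2*y) - 2*(1/(1+y)) + 2*y)
    (fun y hy => ((hd_log2 y hy).sub ((hd_log1 y hy).const_mul 2)).add (hd_sq y))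
    (fun y hy => by
      have h1 : (0:ℝ) < 1 + 2*y := by linarith
      have h2 : (0:ℝ) < 1 + y := by linarith
      have he : 2/(1+2*y) - 2*(1/(1+y)) + 2*y = (6*y^2+4*y^3)/((1+2*y)*(1+y)) := by
        field_simp; ring
      rw [he]; positivity) hx
  simp only [mul_zero, add_zero, Real.log_one] at key
  norm_num at key
  linarith

lemma phi_upper {x : ℝ} (hx : 0 ≤ x) :
    Real.log (1 + 2*x) - 2 * Real.log (1 + x) ≤ -x^2 + 2*x^3 + x^4 := by
  have key := mono_aux
    (f := fun x : ℝ => -x^2 + 2*x^3 + x^4 - (Real.log (1+2*x) - 2*Real.log (1+x)))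
    (f' := fun y => -(2*y) + 2*(3*y^2) + 4*y^3 - (2/(1+2*y) - 2*(1/(1+y))))
    (fun y hy => (((hd_sq y).neg.add ((hd_cube y).const_mul 2)).add (hd_quart y)).sub
      ((hd_log2 y hy).sub ((hd_log1 y hy).const_mul 2)))
    (fun y hy => by
      have h1 : (0:ℝ) < 1 + 2*y := by linarith
      have h2 : (0:ℝ) < 1 + y := by linarith
      have he : -(2*y) + 2*(3*y^2) + 4*y^3 - (2/(1+2*y) - 2*(1/(1+y)))
          = (8*y^5+24*y^4+18*y^3)/((1+2*y)*(1+y)) := by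
        field_simp; ring
      rw [he]; positivity) hx
  simp only [mul_zero, add_zero, Real.log_one] at key
  norm_num at key
  linarith

lemma psi_lower {x : ℝ} (hx : 0 ≤ x) : 0 ≤ Real.log (1 + x) - x + x^2/2 := by
  have key := mono_aux (f := fun x : ℝ => Real.log (1+x) - x + x^2/2)
    (f' := fun y => 1/(1+y) - 1 + 2*y/2)
    (fun y hy => ((hd_log1 y hy).sub (hasDerivAt_id' y)).add ((hd_sq y).div_const 2))
    (fun y hy => by
      have h2 : (0:ℝ) < 1 + y := by linarith
      have he : 1/(1+y) - 1 + 2*y/2 = y^2/(1+y) := by field_simp; ring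
      rw [he]; positivity) hx
  simpa using key

lemma psi_upper {x : ℝ} (hx : 0 ≤ x) : Real.log (1 + x) - x + x^2/2 ≤ x^3/3 := by
  have key := mono_aux (f := fun x : ℝ => x^3/3 - (Real.log (1+x) - x + x^2/2))
    (f' := fun y => 3*y^2/3 - (1/(1+y) - 1 + 2*y/2))
    (fun y hy => ((hd_cube y).div_const 3).sub
      (((hd_log1 y hy).sub (hasDerivAt_id' y)).add ((hd_sq y).div_const 2)))
    (fun y hy => by
      have h2 : (0:ℝ) < 1 + y := by linarith
      have he : 3*y^2/3 - (1/(1+y) - 1 + 2*y/2) = y^3/(1+y) := by field_simp; ring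
      rw [he]; positivity) hx
  simp only [add_zero, Real.log_one] at key
  norm_num at key
  linarith


noncomputable def gfun (k : ℝ) (i : ℕ) : ℝ :=
  Real.log i + Real.log (i + 2*k) - 2 * Real.log (i + k)

noncomputable def ffun (z : ℝ) (i : ℕ) : ℝ :=
  i * Real.log (1 + z/i) - z + z^2/(2*i)

lemma gfun_eq {k : ℝ} (hk : 0 < k) {i : ℕ} (hi : 1 ≤ i) :
    gfun k i = Real.log (1 + 2*(k/i)) - 2 * Real.log (1 + k/i) := by
  have hi' : (1:ℝ) ≤ (i:ℝ) := by exact_mod_cast hi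
  have hi0 : (0:ℝ) < i := by linarith
  have h1 : (1 : ℝ) + 2*(k/i) = (i+2*k)/i := by field_simp
  have h2 : (1 : ℝ) + k/i = (i+k)/i := by field_simp
  rw [gfun, h1, h2, Real.log_div (by positivity) (by positivity),
    Real.log_div (by positivity) (by positivity)]
  ring

lemma gfun_ge {k : ℝ} (hk : 0 < k) {i : ℕ} (hi : 1 ≤ i) :
    -k^2/i^2 ≤ gfun k i := by
  have hi' : (1:ℝ) ≤ (i:ℝ) := by exact_mod_cast hi
  have hi0 : (0:ℝ) < i := by linarith
  have := phi_lower (x := k/i) (by positivity)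
  rw [div_pow] at this
  rw [gfun_eq hk hi]
  rw [neg_div]
  exact this

lemma gfun_le {k : ℝ} (hk : 0 < k) {i : ℕ} (hi : 1 ≤ i) :
    gfun k i ≤ -k^2/i^2 + (2*k^3 + k^4)/i^3 := by
  have hi' : (1:ℝ) ≤ (i:ℝ) := by exact_mod_cast hi
  have hi0 : (0:ℝ) < i := by linarith
  have h := phi_upper (x := k/i) (by positivity)
  rw [gfun_eq hk hi]
  have e2 : (k/i)^2 = k^2/(i:ℝ)^2 := div_pow k i 2
  have e3 : (k/i)^3 = k^3/(i:ℝ)^3 := div_pow k i 3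
  have e4 : (k/i)^4 = k^4/(i:ℝ)^4 := div_pow k i 4
  rw [e2, e3, e4] at h
  have h4 : k^4/(i:ℝ)^4 ≤ k^4/(i:ℝ)^3 := by
    apply div_le_div_of_nonneg_left (by positivity) (by positivity)
    nlinarith [pow_le_pow_right₀ hi' (by norm_num : (3:ℕ) ≤ 4)]
  have : -k^2/i^2 + (2*k^3 + k^4)/i^3 = -(k^2/(i:ℝ)^2) + 2*(k^3/i^3) + k^4/i^3 := by
    rw [neg_div]; field_simp; ring
  rw [this]
  linarith

lemma ffun_eq {z : ℝ} {i : ℕ} (hi : 1 ≤ i) :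
    ffun z i = i * (Real.log (1 + z/i) - z/i + (z/i)^2/2) := by
  have hi' : (1:ℝ) ≤ (i:ℝ) := by exact_mod_cast hi
  have hi0 : (0:ℝ) < i := by linarith
  rw [ffun]
  field_simp

lemma ffun_nonneg {z : ℝ} (hz : 0 ≤ z) {i : ℕ} (hi : 1 ≤ i) : 0 ≤ ffun z i := by
  have hi' : (1:ℝ) ≤ (i:ℝ) := by exact_mod_cast hi
  have hi0 : (0:ℝ) < i := by linarith
  rw [ffun_eq hi]
  have := psi_lower (x := z/i) (by positivity)
  positivity

lemma ffun_le {z : ℝ} (hz : 0 ≤ z) {i : ℕ} (hi : 1 ≤ i) :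
    ffun z i ≤ z^3/(3*(i:ℝ)^2) := by
  have hi' : (1:ℝ) ≤ (i:ℝ) := by exact_mod_cast hi
  have hi0 : (0:ℝ) < i := by linarith
  rw [ffun_eq hi]
  have h := psi_upper (x := z/i) (by positivity)
  have h2 : (i:ℝ) * (Real.log (1 + z/i) - z/i + (z/i)^2/2) ≤ i * ((z/i)^3/3) := by
    apply mul_le_mul_of_nonneg_left h (by positivity)
  have h3 : (i:ℝ) * ((z/i)^3/3) = z^3/(3*(i:ℝ)^2) := by
    rw [div_pow]; field_simp
  linarith

lemma telescope (h : ℕ → ℝ) (N : ℕ) :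
    ∀ M, N ≤ M → ∑ i ∈ Ioc N M, (h i - h (i+1)) = h (N+1) - h (M+1) := by
  intro M
  induction M with
  | zero => intro hM; interval_cases N; simp
  | succ n ih =>
    intro hM
    rcases Nat.lt_or_ge N (n+1) with h1 | h1
    · have hNn : N ≤ n := Nat.lt_succ_iff.mp h1
      rw [Finset.sum_Ioc_succ_top hNn, ih hNn]
      ring
    · have : N = n + 1 := le_antisymm hM h1
      subst this
      simp


noncomputable def pfun (k : ℝ) (i : ℕ) : ℝ := (i:ℝ) * ((i:ℝ) + 2*k) / ((i:ℝ)+k)^2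

lemma prod_Ioc_eq_range (f : ℕ → ℝ) (N : ℕ) :
    ∏ i ∈ Ioc 0 N, f i = ∏ n ∈ range N, f (n+1) := by
  induction N with
  | zero => simp
  | succ n ih => rw [Finset.prod_Ioc_succ_top (Nat.zero_le _), ih, Finset.prod_range_succ]

lemma sum_Ioc_eq_range (f : ℕ → ℝ) (N : ℕ) :
    ∑ i ∈ Ioc 0 N, f i = ∑ n ∈ range N, f (n+1) := by
  induction N with
  | zero => simp
  | succ n ih => rw [Finset.sum_Ioc_succ_top (Nat.zero_le _), ih, Finset.sum_range_succ]

lemma pfun_pos {k : ℝ} (hk : 0 < k) {i : ℕ} (hi : 1 ≤ i) : 0 < pfun k i := by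
  have hi' : (1:ℝ) ≤ (i:ℝ) := by exact_mod_cast hi
  have hi0 : (0:ℝ) < i := by linarith
  rw [pfun]; positivity

lemma log_pfun {k : ℝ} (hk : 0 < k) {i : ℕ} (hi : 1 ≤ i) :
    Real.log (pfun k i) = gfun k i := by
  have hi' : (1:ℝ) ≤ (i:ℝ) := by exact_mod_cast hi
  have hi0 : (0:ℝ) < i := by linarith
  rw [pfun, gfun, Real.log_div (by positivity) (by positivity),
    Real.log_mul (by positivity) (by positivity), Real.log_pow]
  push_cast
  ring

lemma prod_pfun_eq {k : ℝ} (hk : 0 < k) {n : ℕ} (hn : 1 ≤ n) :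
    ∏ i ∈ Ioc 0 (n+1), pfun k i =
      (((n:ℝ)+1)/n) * ((Real.GammaSeq (1+k) n)^2 / Real.GammaSeq (1+2*k) n) := by
  have hn' : (1:ℝ) ≤ (n:ℝ) := by exact_mod_cast hn
  have hn0 : (0:ℝ) < n := by linarith
  have hA : (0:ℝ) < ∏ j ∈ range (n+1), ((1+k) + (j:ℝ)) := by
    apply Finset.prod_pos; intro j hj; positivity
  have hB : (0:ℝ) < ∏ j ∈ range (n+1), ((1+2*k) + (j:ℝ)) := by
    apply Finset.prod_pos; intro j hj; positivity
  have hfac : (0:ℝ) < (n.factorial : ℝ) := by exact_mod_cast n.factorial_pos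
  have hr1 : (0:ℝ) < (n:ℝ)^(1+k) := Real.rpow_pos_of_pos hn0 _
  have hr2 : (0:ℝ) < (n:ℝ)^(1+2*k) := Real.rpow_pos_of_pos hn0 _
  have e1 : ((n:ℝ)^(1+k))^2 = n * (n:ℝ)^(1+2*k) := by
    rw [← Real.rpow_natCast ((n:ℝ)^(1+k)) 2, ← Real.rpow_mul hn0.le]
    rw [show (1+k) * ((2:ℕ):ℝ) = 1 + (1+2*k) by push_cast; ring]
    rw [Real.rpow_add hn0, Real.rpow_one]
  have lhs_eq : ∏ i ∈ Ioc 0 (n+1), pfun k i =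
      ((n+1).factorial : ℝ) * (∏ j ∈ range (n+1), ((1+2*k) + (j:ℝ))) /
        (∏ j ∈ range (n+1), ((1+k) + (j:ℝ)))^2 := by
    rw [prod_Ioc_eq_range]
    have : ∀ j ∈ range (n+1), pfun k (j+1) =
        (((j:ℝ)+1) * ((1+2*k) + (j:ℝ))) / ((1+k) + (j:ℝ))^2 := by
      intro j hj
      rw [pfun]
      push_cast
      ring_nf
    rw [Finset.prod_congr rfl this]
    rw [Finset.prod_div_distrib, Finset.prod_mul_distrib, Finset.prod_pow]
    congr 1
    congr 1
    have hfp : ((∏ x ∈ range (n+1), (x + 1) : ℕ) : ℝ) = (((n+1).factorial : ℕ) : ℝ) := by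
      norm_cast
      exact Finset.prod_range_add_one_eq_factorial (n+1)
    rw [← hfp]
    push_cast
    rfl
  rw [lhs_eq, Real.GammaSeq, Real.GammaSeq]
  rw [div_pow, mul_pow, e1]
  rw [show ((n+1).factorial : ℝ) = ((n:ℝ)+1) * (n.factorial:ℝ) by
    rw [Nat.factorial_succ]; push_cast; ring]
  field_simp

lemma sum_g_tendsto {k : ℝ} (hk : 0 < k) :
    Tendsto (fun M => ∑ i ∈ Ioc 0 M, gfun k i) atTop
      (𝓝 (2*Real.log (Real.Gamma (1+k)) - Real.log (Real.Gamma (1+2*k)))) := by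
  have hG1 : 0 < Real.Gamma (1+k) := Real.Gamma_pos_of_pos (by linarith)
  have hG2 : 0 < Real.Gamma (1+2*k) := Real.Gamma_pos_of_pos (by linarith)
  have hlim : 0 < Real.Gamma (1+k)^2 / Real.Gamma (1+2*k) := by positivity
  -- convergence of products
  have h1 : Tendsto (fun n : ℕ => (((n:ℝ)+1)/n) *
      ((Real.GammaSeq (1+k) n)^2 / Real.GammaSeq (1+2*k) n)) atTop
      (𝓝 (1 * (Real.Gamma (1+k)^2 / Real.Gamma (1+2*k)))) := by
    apply Tendsto.mul
    · have h0 : Tendsto (fun n : ℕ => 1 + 1/(n:ℝ)) atTop (𝓝 (1 + 0)) :=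
        tendsto_const_nhds.add tendsto_one_div_atTop_nhds_zero_nat
      rw [add_zero] at h0
      apply h0.congr'
      filter_upwards [eventually_ge_atTop 1] with n hn
      have hn0 : (0:ℝ) < n := by exact_mod_cast hn
      field_simp
    · exact (((Real.GammaSeq_tendsto_Gamma (1+k)).pow 2).div
        (Real.GammaSeq_tendsto_Gamma (1+2*k)) hG2.ne')
  rw [one_mul] at h1
  have h2 : Tendsto (fun M => ∏ i ∈ Ioc 0 M, pfun k i) atTop
      (𝓝 (Real.Gamma (1+k)^2 / Real.Gamma (1+2*k))) := by
    rw [← tendsto_add_atTop_iff_nat 1]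
    apply h1.congr'
    filter_upwards [eventually_ge_atTop 1] with n hn
    exact (prod_pfun_eq hk hn).symm
  have h3 : Tendsto (fun M => ∑ i ∈ Ioc 0 M, gfun k i) atTop
      (𝓝 (Real.log (Real.Gamma (1+k)^2 / Real.Gamma (1+2*k)))) := by
    have := ((Real.continuousAt_log hlim.ne').tendsto).comp h2
    apply this.congr
    intro M
    simp only [Function.comp_apply]
    rw [Real.log_prod]
    · apply Finset.sum_congr rfl
      intro i hi
      exact log_pfun hk (mem_Ioc.mp hi).1
    · intro i hi
      exact (pfun_pos hk (mem_Ioc.mp hi).1).ne'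
  rwa [Real.log_div (by positivity) hG2.ne', Real.log_pow] at h3


noncomputable def c0 (k : ℝ) : ℝ :=
  Real.log (Real.Gamma (1+2*k)) - 2 * Real.log (Real.Gamma (1+k))

noncomputable def RR (k : ℝ) (N : ℕ) : ℝ := -(c0 k) - ∑ i ∈ Ioc 0 N, gfun k i

lemma tendsto_tail {k : ℝ} (hk : 0 < k) (N : ℕ) :
    Tendsto (fun M => ∑ i ∈ Ioc N M, gfun k i) atTop (𝓝 (RR k N)) := by
  have h := (sum_g_tendsto hk).sub_const (∑ i ∈ Ioc 0 N, gfun k i)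
  have he : 2*Real.log (Real.Gamma (1+k)) - Real.log (Real.Gamma (1+2*k)) -
      (∑ i ∈ Ioc 0 N, gfun k i) = RR k N := by
    rw [RR, c0]; ring
  rw [he] at h
  apply h.congr'
  filter_upwards [eventually_ge_atTop N] with M hM
  rw [← Finset.sum_Ioc_consecutive _ (Nat.zero_le N) hM]
  ring

lemma RR_ge {k : ℝ} (hk : 0 < k) {N : ℕ} (hN : 1 ≤ N) : -k^2/(N:ℝ) ≤ RR k N := by
  have hN' : (1:ℝ) ≤ (N:ℝ) := by exact_mod_cast hN
  have hN0 : (0:ℝ) < N := by linarith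
  apply ge_of_tendsto (tendsto_tail hk N)
  filter_upwards [eventually_ge_atTop N] with M hM
  have key : ∀ i ∈ Ioc N M, -(k^2) * (1/((i:ℝ)-1) - 1/(i:ℝ)) ≤ gfun k i := by
    intro i hi
    obtain ⟨hi1, hi2⟩ := mem_Ioc.mp hi
    have hi1' : 1 ≤ i := le_trans hN hi1.le
    have hx : (2:ℝ) ≤ (i:ℝ) := by
      have : N + 1 ≤ i := hi1
      have : (N:ℝ) + 1 ≤ (i:ℝ) := by exact_mod_cast this
      linarith
    have hgl := gfun_ge hk hi1'
    have e1 : 1/((i:ℝ)-1) - 1/(i:ℝ) = 1/(((i:ℝ)-1)*(i:ℝ)) := by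
      rw [div_sub_div _ _ (by linarith) (by linarith)]
      congr 1
      ring
    have e2 : 1/(((i:ℝ)-1)*(i:ℝ)) ≥ 1/(i:ℝ)^2 := by
      apply one_div_le_one_div_of_le (by nlinarith) (by nlinarith)
    have hmul : k^2*(1/(i:ℝ)^2) ≤ k^2*(1/(((i:ℝ)-1)*(i:ℝ))) :=
      mul_le_mul_of_nonneg_left e2 (sq_nonneg k)
    have : -(k^2) * (1/((i:ℝ)-1) - 1/(i:ℝ)) ≤ -k^2/(i:ℝ)^2 := by
      rw [e1]
      have he : -k^2/(i:ℝ)^2 = -(k^2*(1/(i:ℝ)^2)) := by ring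
      rw [he]
      linarith
    linarith
  have hsum := Finset.sum_le_sum key
  have htel := telescope (fun i => 1/((i:ℝ)-1)) N M hM
  simp only [← Finset.mul_sum] at hsum ⊢
  have e3 : ∑ i ∈ Ioc N M, (1/((i:ℝ)-1) - 1/(i:ℝ)) =
      ∑ i ∈ Ioc N M, ((fun i : ℕ => 1/((i:ℝ)-1)) i - (fun i : ℕ => 1/((i:ℝ)-1)) (i+1)) := by
    apply Finset.sum_congr rfl
    intro i hi
    push_cast
    ring_nf
  rw [e3, htel] at hsum
  have e4 : (fun i : ℕ => 1/((i:ℝ)-1)) (N+1) - (fun i : ℕ => 1/((i:ℝ)-1)) (M+1)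
      = 1/(N:ℝ) - 1/(M:ℝ) := by push_cast; ring_nf
  rw [e4] at hsum
  have hM0 : (0:ℝ) ≤ (M:ℝ) := Nat.cast_nonneg M
  have : -(k^2) * (1/(N:ℝ) - 1/(M:ℝ)) ≥ -(k^2) * (1/(N:ℝ)) := by
    have h1M : 0 ≤ 1/(M:ℝ) := by positivity
    nlinarith
  calc -k^2/(N:ℝ) = -(k^2) * (1/(N:ℝ)) := by ring
  _ ≤ -(k^2) * (1/(N:ℝ) - 1/(M:ℝ)) := this
  _ ≤ ∑ i ∈ Ioc N M, gfun k i := hsum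

lemma RR_le {k : ℝ} (hk : 0 < k) {N : ℕ} (hN : 1 ≤ N) :
    RR k N ≤ -k^2/((N:ℝ)+1) + (2*k^3+k^4)/(N:ℝ)^2 := by
  have hN' : (1:ℝ) ≤ (N:ℝ) := by exact_mod_cast hN
  have hN0 : (0:ℝ) < N := by linarith
  set C := 2*k^3 + k^4 with hC
  have hCpos : 0 < C := by rw [hC]; positivity
  have hub : Tendsto (fun M : ℕ => -k^2/((N:ℝ)+1) + k^2*(1/((M:ℝ)+1)) + (C/N)*(1/(N:ℝ)))
      atTop (𝓝 (-k^2/((N:ℝ)+1) + k^2*0 + (C/N)*(1/(N:ℝ)))) := by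
    apply Tendsto.add_const
    apply Tendsto.add tendsto_const_nhds
    exact (tendsto_one_div_add_atTop_nhds_zero_nat).const_mul _
  have hle := le_of_tendsto_of_tendsto (tendsto_tail hk N) hub ?_
  · calc RR k N ≤ -k^2/((N:ℝ)+1) + k^2*0 + (C/N)*(1/(N:ℝ)) := hle
    _ = -k^2/((N:ℝ)+1) + C/(N:ℝ)^2 := by field_simp; ring
  filter_upwards [eventually_ge_atTop N] with M hM
  have key : ∀ i ∈ Ioc N M, gfun k i ≤
      -(k^2) * (1/(i:ℝ) - 1/((i:ℝ)+1)) + (C/N) * (1/((i:ℝ)-1) - 1/(i:ℝ)) := by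
    intro i hi
    obtain ⟨hi1, hi2⟩ := mem_Ioc.mp hi
    have hi1' : 1 ≤ i := le_trans hN hi1.le
    have hxN : (N:ℝ) + 1 ≤ (i:ℝ) := by exact_mod_cast hi1
    have hx : (2:ℝ) ≤ (i:ℝ) := by linarith
    have hgu := gfun_le hk hi1'
    rw [← hC] at hgu
    have e1 : 1/(i:ℝ) - 1/((i:ℝ)+1) = 1/((i:ℝ)*((i:ℝ)+1)) := by
      rw [div_sub_div _ _ (by linarith) (by linarith)]
      congr 1
      ring
    have e2 : 1/((i:ℝ)-1) - 1/(i:ℝ) = 1/(((i:ℝ)-1)*(i:ℝ)) := by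
      rw [div_sub_div _ _ (by linarith) (by linarith)]
      congr 1
      ring
    have h1 : -(k^2) * (1/((i:ℝ)*((i:ℝ)+1))) ≥ -k^2/(i:ℝ)^2 := by
      have hle : 1/((i:ℝ)*((i:ℝ)+1)) ≤ 1/(i:ℝ)^2 :=
        one_div_le_one_div_of_le (by nlinarith) (by nlinarith)
      have hmul : k^2*(1/((i:ℝ)*((i:ℝ)+1))) ≤ k^2*(1/(i:ℝ)^2) :=
        mul_le_mul_of_nonneg_left hle (sq_nonneg k)
      have he : -k^2/(i:ℝ)^2 = -(k^2*(1/(i:ℝ)^2)) := by ring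
      rw [ge_iff_le, he]
      linarith
    have h2 : C/(i:ℝ)^3 ≤ (C/N) * (1/(((i:ℝ)-1)*(i:ℝ))) := by
      have hle : 1/(i:ℝ)^3 ≤ 1/((N:ℝ)*(((i:ℝ)-1)*(i:ℝ))) :=
        one_div_le_one_div_of_le (by nlinarith) (by nlinarith)
      have hmul := mul_le_mul_of_nonneg_left hle hCpos.le
      calc C/(i:ℝ)^3 = C * (1/(i:ℝ)^3) := by ring
      _ ≤ C * (1/((N:ℝ)*(((i:ℝ)-1)*(i:ℝ)))) := hmul
      _ = C/((N:ℝ)*(((i:ℝ)-1)*(i:ℝ))) := mul_one_div _ _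
      _ = (C/N) * (1/(((i:ℝ)-1)*(i:ℝ))) := by
          rw [div_mul_div_comm, mul_one]
    rw [e1, e2]
    have : -k^2/(i:ℝ)^2 + C/(i:ℝ)^3 ≤
        -(k^2) * (1/((i:ℝ)*((i:ℝ)+1))) + (C/N) * (1/(((i:ℝ)-1)*(i:ℝ))) := by
      linarith
    linarith
  have hsum := Finset.sum_le_sum key
  rw [Finset.sum_add_distrib, ← Finset.mul_sum, ← Finset.mul_sum] at hsum
  have htel1 : ∑ i ∈ Ioc N M, (1/(i:ℝ) - 1/((i:ℝ)+1)) = 1/((N:ℝ)+1) - 1/((M:ℝ)+1) := by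
    have := telescope (fun i => 1/(i:ℝ)) N M hM
    have e : ∑ i ∈ Ioc N M, (1/(i:ℝ) - 1/((i:ℝ)+1)) =
        ∑ i ∈ Ioc N M, ((fun i : ℕ => 1/(i:ℝ)) i - (fun i : ℕ => 1/(i:ℝ)) (i+1)) := by
      apply Finset.sum_congr rfl; intro i hi; push_cast; ring_nf
    rw [e, this]
    push_cast; ring_nf
  have htel2 : ∑ i ∈ Ioc N M, (1/((i:ℝ)-1) - 1/(i:ℝ)) = 1/(N:ℝ) - 1/(M:ℝ) := by
    have := telescope (fun i => 1/((i:ℝ)-1)) N M hM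
    have e : ∑ i ∈ Ioc N M, (1/((i:ℝ)-1) - 1/(i:ℝ)) =
        ∑ i ∈ Ioc N M, ((fun i : ℕ => 1/((i:ℝ)-1)) i - (fun i : ℕ => 1/((i:ℝ)-1)) (i+1)) := by
      apply Finset.sum_congr rfl; intro i hi; push_cast; ring_nf
    rw [e, this]
    push_cast; ring_nf
  rw [htel1, htel2] at hsum
  have hMN : (N:ℝ) ≤ (M:ℝ) := by exact_mod_cast hM
  have t1 : -(k^2) * (1/((N:ℝ)+1) - 1/((M:ℝ)+1)) =
      -k^2/((N:ℝ)+1) + k^2*(1/((M:ℝ)+1)) := by ring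
  have t2 : (C/(N:ℝ)) * (1/(N:ℝ) - 1/(M:ℝ)) ≤ (C/N)*(1/(N:ℝ)) := by
    have hpos : 0 ≤ (C/(N:ℝ))*(1/(M:ℝ)) := by positivity
    have texp : (C/(N:ℝ))*(1/(N:ℝ) - 1/(M:ℝ)) =
        (C/N)*(1/(N:ℝ)) - (C/N)*(1/(M:ℝ)) := by ring
    rw [texp]
    linarith
  linarith

lemma T1_tendsto {k : ℝ} (hk : 0 < k) :
    Tendsto (fun N : ℕ => (N:ℝ) * (c0 k + ∑ i ∈ Ioc 0 N, gfun k i)) atTop (𝓝 (k^2)) := by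
  set C := 2*k^3 + k^4 with hC
  have hCpos : 0 < C := by rw [hC]; positivity
  have hlow : Tendsto (fun N : ℕ => k^2 * (1 - 1/((N:ℝ)+1)) - C*(1/(N:ℝ)))
      atTop (𝓝 (k^2)) := by
    have hone : Tendsto (fun N : ℕ => (1:ℝ) - 1/((N:ℝ)+1)) atTop (𝓝 (1 - 0)) :=
      Tendsto.sub tendsto_const_nhds tendsto_one_div_add_atTop_nhds_zero_nat
    have h := (hone.const_mul (k^2)).sub ((tendsto_one_div_atTop_nhds_zero_nat).const_mul C)
    convert h using 2
    norm_num
  apply tendsto_of_tendsto_of_tendsto_of_le_of_le' hlow tendsto_const_nhds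
  · filter_upwards [eventually_ge_atTop 1] with N hN
    have hN' : (1:ℝ) ≤ (N:ℝ) := by exact_mod_cast hN
    have hN0 : (0:ℝ) < N := by linarith
    have hRu := RR_le hk hN
    rw [← hC] at hRu
    have he : (N:ℝ) * (c0 k + ∑ i ∈ Ioc 0 N, gfun k i) = (N:ℝ) * (-(RR k N)) := by
      rw [RR]; ring
    rw [he]
    have : (N:ℝ) * (-(RR k N)) ≥ (N:ℝ) * (k^2/((N:ℝ)+1) - C/(N:ℝ)^2) := by
      apply mul_le_mul_of_nonneg_left _ hN0.le
      have : -(RR k N) ≥ k^2/((N:ℝ)+1) - C/(N:ℝ)^2 := by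
        rw [ge_iff_le, le_neg]
        calc RR k N ≤ -k^2/((N:ℝ)+1) + C/(N:ℝ)^2 := hRu
        _ = -(k^2/((N:ℝ)+1) - C/(N:ℝ)^2) := by ring
      linarith
    have e2 : (N:ℝ) * (k^2/((N:ℝ)+1) - C/(N:ℝ)^2) = k^2 * (1 - 1/((N:ℝ)+1)) - C*(1/(N:ℝ)) := by
      field_simp
      ring
    linarith
  · filter_upwards [eventually_ge_atTop 1] with N hN
    have hN' : (1:ℝ) ≤ (N:ℝ) := by exact_mod_cast hN
    have hN0 : (0:ℝ) < N := by linarith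
    have hRl := RR_ge hk hN
    have he : (N:ℝ) * (c0 k + ∑ i ∈ Ioc 0 N, gfun k i) = (N:ℝ) * (-(RR k N)) := by
      rw [RR]; ring
    rw [he]
    have : -(RR k N) ≤ k^2/(N:ℝ) := by
      rw [neg_le]
      calc -(k^2/(N:ℝ)) = -k^2/(N:ℝ) := by ring
      _ ≤ RR k N := hRl
    calc (N:ℝ) * (-(RR k N)) ≤ (N:ℝ) * (k^2/(N:ℝ)) := by
          apply mul_le_mul_of_nonneg_left this hN0.le
    _ = k^2 := by field_simp


noncomputable def FF (z : ℝ) : ℝ := ∑' n : ℕ, ffun z (n+1)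

lemma ffun_summable {z : ℝ} (hz : 0 ≤ z) : Summable (fun n : ℕ => ffun z (n+1)) := by
  have h1 : Summable (fun n : ℕ => 1/((n:ℝ))^2) := by
    rw [Real.summable_one_div_nat_pow]
    norm_num
  have h2 := (summable_nat_add_iff 1).mpr h1
  have h3 := h2.mul_left (z^3/3)
  apply Summable.of_nonneg_of_le
    (fun n => ffun_nonneg hz (Nat.succ_le_succ (Nat.zero_le n)))
    (fun n => ffun_le hz (Nat.succ_le_succ (Nat.zero_le n)))
  apply h3.congr
  intro n
  have hne : ((n:ℝ)+1) ≠ 0 := by positivity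
  push_cast
  field_simp

lemma sum_ff_tendsto {z : ℝ} (hz : 0 ≤ z) :
    Tendsto (fun N => ∑ i ∈ Ioc 0 N, ffun z i) atTop (𝓝 (FF z)) := by
  have h := (ffun_summable hz).hasSum.tendsto_sum_nat
  exact h.congr fun N => (sum_Ioc_eq_range _ N).symm

lemma ig_eq {k : ℝ} (hk : 0 < k) {i : ℕ} (hi : 1 ≤ i) :
    (i:ℝ) * gfun k i = ffun (2*k) i - 2 * ffun k i - k^2/i := by
  have hi' : (1:ℝ) ≤ (i:ℝ) := by exact_mod_cast hi
  have hi0 : (0:ℝ) < i := by linarith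
  have h1 : Real.log (1 + 2*k/(i:ℝ)) = Real.log ((i:ℝ)+2*k) - Real.log i := by
    rw [show (1 + 2*k/(i:ℝ)) = ((i:ℝ)+2*k)/i by field_simp,
      Real.log_div (by positivity) (by positivity)]
  have h2 : Real.log (1 + k/(i:ℝ)) = Real.log ((i:ℝ)+k) - Real.log i := by
    rw [show (1 + k/(i:ℝ)) = ((i:ℝ)+k)/i by field_simp,
      Real.log_div (by positivity) (by positivity)]
  rw [gfun, ffun, ffun, h1, h2]
  field_simp
  ring

lemma gamma_prod {k : ℝ} (hk : 0 < k) (N : ℕ) :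
    Real.Gamma ((N:ℝ)+1) * Real.Gamma ((N:ℝ)+1+2*k) / Real.Gamma ((N:ℝ)+1+k)^2 =
      (Real.Gamma (1+2*k) / Real.Gamma (1+k)^2) * ∏ i ∈ Ioc 0 N, pfun k i := by
  induction N with
  | zero => simp [Real.Gamma_one]
  | succ n ih =>
    have hn0 : (0:ℝ) ≤ n := Nat.cast_nonneg n
    have hg1 : Real.Gamma ((n:ℝ)+1) > 0 := Real.Gamma_pos_of_pos (by linarith)
    have hg2 : Real.Gamma ((n:ℝ)+1+2*k) > 0 := Real.Gamma_pos_of_pos (by linarith)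
    have hg3 : Real.Gamma ((n:ℝ)+1+k) > 0 := Real.Gamma_pos_of_pos (by linarith)
    have e0 : ((n+1:ℕ):ℝ) + 1 = ((n:ℝ)+1) + 1 := by push_cast; ring
    have e1 : ((n+1:ℕ):ℝ) + 1 + 2*k = ((n:ℝ)+1+2*k) + 1 := by push_cast; ring
    have e2 : ((n+1:ℕ):ℝ) + 1 + k = ((n:ℝ)+1+k) + 1 := by push_cast; ring
    rw [e1, e2, e0,
      Real.Gamma_add_one (s := (n:ℝ)+1) (by positivity),
      Real.Gamma_add_one (s := (n:ℝ)+1+2*k) (by positivity),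
      Real.Gamma_add_one (s := (n:ℝ)+1+k) (by positivity),
      Finset.prod_Ioc_succ_top (Nat.zero_le _)]
    have hpf : pfun k (n+1) = ((n:ℝ)+1) * (((n:ℝ)+1) + 2*k) / (((n:ℝ)+1)+k)^2 := by
      rw [pfun]; push_cast; ring
    have hden : ((n:ℝ)+1+k) ≠ 0 := by positivity
    calc ((n:ℝ)+1) * Real.Gamma ((n:ℝ)+1) * ((((n:ℝ)+1+2*k)) * Real.Gamma ((n:ℝ)+1+2*k)) /
          (((n:ℝ)+1+k) * Real.Gamma ((n:ℝ)+1+k))^2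
        = (Real.Gamma ((n:ℝ)+1) * Real.Gamma ((n:ℝ)+1+2*k) / Real.Gamma ((n:ℝ)+1+k)^2) *
          (((n:ℝ)+1) * (((n:ℝ)+1) + 2*k) / (((n:ℝ)+1)+k)^2) := by
          rw [mul_pow]
          field_simp
      _ = (Real.Gamma (1+2*k) / Real.Gamma (1+k)^2 * ∏ i ∈ Ioc 0 n, pfun k i) *
          pfun k (n+1) := by rw [ih, hpf]
      _ = Real.Gamma (1+2*k) / Real.Gamma (1+k)^2 *
          ((∏ i ∈ Ioc 0 n, pfun k i) * pfun k (n+1)) := by ring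

lemma prod_eq {k : ℝ} (hk : 0 < k) (N : ℕ) :
    ∏ j ∈ Ioc 0 N, (Real.Gamma (j:ℝ) * Real.Gamma ((j:ℝ) + 2*k) / Real.Gamma ((j:ℝ)+k)^2) =
      (Real.Gamma (1+2*k) / Real.Gamma (1+k)^2)^N * ∏ i ∈ Ioc 0 N, (pfun k i)^(N - i) := by
  induction N with
  | zero => simp
  | succ n ih =>
    rw [Finset.prod_Ioc_succ_top (Nat.zero_le _), ih,
      Finset.prod_Ioc_succ_top (Nat.zero_le _) (fun i => (pfun k i)^(n+1-i))]
    have hsplit : ∏ i ∈ Ioc 0 n, (pfun k i)^(n+1-i) =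
        (∏ i ∈ Ioc 0 n, (pfun k i)^(n-i)) * ∏ i ∈ Ioc 0 n, pfun k i := by
      rw [← Finset.prod_mul_distrib]
      apply Finset.prod_congr rfl
      intro i hi
      have hin : i ≤ n := (mem_Ioc.mp hi).2
      rw [show n+1-i = (n-i)+1 by omega, pow_succ]
    have hterm : Real.Gamma (((n+1:ℕ)):ℝ) * Real.Gamma (((n+1:ℕ):ℝ) + 2*k) /
        Real.Gamma (((n+1:ℕ):ℝ)+k)^2 =
        (Real.Gamma (1+2*k) / Real.Gamma (1+k)^2) * ∏ i ∈ Ioc 0 n, pfun k i := by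
      have e0 : ((n+1:ℕ):ℝ) = (n:ℝ)+1 := by push_cast; ring
      rw [e0, show (n:ℝ)+1+2*k = (n:ℝ)+1+2*k from rfl]
      exact gamma_prod hk n
    rw [hterm, hsplit]
    rw [Nat.sub_self, pow_zero, mul_one, pow_succ]
    ring


lemma Icc_one_eq_Ioc (N : ℕ) : Finset.Icc 1 N = Finset.Ioc 0 N := by
  ext x; simp [Finset.mem_Icc, Finset.mem_Ioc]; omega

lemma harmonic_cast (N : ℕ) : ((harmonic N : ℚ) : ℝ) = ∑ i ∈ Ioc 0 N, 1/(i:ℝ) := by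
  rw [harmonic_eq_sum_Icc, Icc_one_eq_Ioc]
  push_cast
  apply Finset.sum_congr rfl
  intro i hi
  rw [one_div]

end BGaux

namespace BGaux

lemma barnesG_eq {z : ℝ} (hz : 0 < z) :
    BarnesG (1+z) = (2*Real.pi)^(z/2) *
      Real.exp (-(z + z^2*(1 + Real.eulerMascheroniConstant))/2) * Real.exp (FF z) := by
  have he : (1+z) - 1 = z := by ring
  rw [BarnesG, he]
  congr 1
  have hs : HasSum (fun n : ℕ => ffun z (n+1)) (FF z) := (ffun_summable hz.le).hasSum
  have hp := hs.rexp
  rw [← hp.tprod_eq]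
  apply tprod_congr
  intro n
  have hn1 : (0:ℝ) < (n:ℝ)+1 := by positivity
  have hb : (0:ℝ) < 1 + z/((n:ℝ)+1) := by positivity
  show (1 + z/((n:ℝ)+1))^(n+1) * Real.exp (-z + z^2/(2*((n:ℝ)+1))) = Real.exp (ffun z (n+1))
  rw [ffun]
  rw [show ((n+1:ℕ):ℝ) = (n:ℝ)+1 by push_cast; ring]
  rw [show ((n:ℝ)+1)*Real.log (1+z/((n:ℝ)+1)) - z + z^2/(2*((n:ℝ)+1)) =
    ((n:ℝ)+1)*Real.log (1+z/((n:ℝ)+1)) + (-z + z^2/(2*((n:ℝ)+1))) by ring]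
  rw [show ((n:ℝ)+1) = ((n+1:ℕ):ℝ) by push_cast; ring]
  have hb' : (0:ℝ) < 1 + z/(((n+1:ℕ)):ℝ) := by positivity
  conv_rhs => rw [Real.exp_add]
  congr 1
  rw [Real.exp_nat_mul, Real.exp_log hb']

lemma barnes_ratio {k : ℝ} (hk : 0 < k) :
    Real.exp (k^2 + (2*FF k - FF (2*k) + k^2*Real.eulerMascheroniConstant)) =
      BarnesG (1+k)^2 / BarnesG (1+2*k) := by
  have h2k : 0 < 2*k := by linarith
  have h2pi : (0:ℝ) < 2*Real.pi := by
    have := Real.pi_pos; linarith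
  rw [barnesG_eq hk, barnesG_eq h2k]
  have hrp : ((2*Real.pi)^(k/2))^2 = (2*Real.pi)^k := by
    rw [← Real.rpow_natCast ((2*Real.pi)^(k/2)) 2, ← Real.rpow_mul h2pi.le]
    norm_num
  rw [show (2*k)/2 = k by ring]
  rw [mul_pow, mul_pow, hrp]
  rw [← Real.exp_nat_mul, ← Real.exp_nat_mul]
  rw [mul_assoc, mul_assoc, ← Real.exp_add, ← Real.exp_add]
  rw [mul_div_mul_left _ _ (ne_of_gt (Real.rpow_pos_of_pos h2pi k))]
  rw [← Real.exp_sub]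
  congr 1
  push_cast
  ring

end BGaux

open BGaux in
/-- The `2k`-th CUE moment `∏_{j=1}^N Γ(j)Γ(j+2k)/Γ(j+k)²` is asymptotic to
`N^{k²} G(1+k)²/G(1+2k)`. -/
theorem moments_asymptotic (k : ℝ) (hk : 0 < k) :
    Tendsto
      (fun N : ℕ =>
        (∏ j ∈ Finset.Icc 1 N,
            Real.Gamma j * Real.Gamma (j + 2 * k) / Real.Gamma (j + k) ^ 2) /
          (N : ℝ) ^ (k ^ 2))
      atTop (nhds (BarnesG (1 + k) ^ 2 / BarnesG (1 + 2 * k))) := by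
  have h2k : 0 < 2*k := by linarith
  have hG1 : 0 < Real.Gamma (1+k) := Real.Gamma_pos_of_pos (by linarith)
  have hG2 : 0 < Real.Gamma (1+2*k) := Real.Gamma_pos_of_pos (by linarith)
  have hc : 0 < Real.Gamma (1+2*k)/Real.Gamma (1+k)^2 := by positivity
  set γ := Real.eulerMascheroniConstant with hγ
  -- the exponent sequence
  have hT2 : Tendsto (fun N : ℕ => 2*(∑ i ∈ Ioc 0 N, ffun k i) - (∑ i ∈ Ioc 0 N, ffun (2*k) i)
      + k^2*((harmonic N : ℝ) - Real.log N)) atTop (𝓝 (2*FF k - FF (2*k) + k^2*γ)) := by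
    exact (((sum_ff_tendsto hk.le).const_mul 2).sub (sum_ff_tendsto h2k.le)).add
      ((Real.tendsto_harmonic_sub_log).const_mul (k^2))
  have hE : Tendsto (fun N : ℕ => (N:ℝ)*(c0 k + ∑ i ∈ Ioc 0 N, gfun k i) +
      (2*(∑ i ∈ Ioc 0 N, ffun k i) - (∑ i ∈ Ioc 0 N, ffun (2*k) i)
        + k^2*((harmonic N:ℝ) - Real.log N))) atTop
      (𝓝 (k^2 + (2*FF k - FF (2*k) + k^2*γ))) := (T1_tendsto hk).add hT2
  have hexp := (Real.continuous_exp.tendsto _).comp hE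
  rw [← barnes_ratio hk]
  apply hexp.congr'
  filter_upwards [eventually_ge_atTop 1] with N hN
  have hN' : (1:ℝ) ≤ (N:ℝ) := by exact_mod_cast hN
  have hN0 : (0:ℝ) < N := by linarith
  simp only [Function.comp_apply]
  rw [Icc_one_eq_Ioc]
  -- positivity of the product
  have hterm : ∀ j ∈ Ioc 0 N, 0 < Real.Gamma (j:ℝ) * Real.Gamma ((j:ℝ) + 2*k) /
      Real.Gamma ((j:ℝ)+k)^2 := by
    intro j hj
    have hj1 : 1 ≤ j := (mem_Ioc.mp hj).1
    have hj' : (1:ℝ) ≤ (j:ℝ) := by exact_mod_cast hj1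
    have g1 : 0 < Real.Gamma (j:ℝ) := Real.Gamma_pos_of_pos (by linarith)
    have g2 : 0 < Real.Gamma ((j:ℝ)+2*k) := Real.Gamma_pos_of_pos (by linarith)
    have g3 : 0 < Real.Gamma ((j:ℝ)+k) := Real.Gamma_pos_of_pos (by linarith)
    positivity
  have hPpos : 0 < ∏ j ∈ Ioc 0 N,
      (Real.Gamma (j:ℝ) * Real.Gamma ((j:ℝ) + 2*k) / Real.Gamma ((j:ℝ)+k)^2) :=
    Finset.prod_pos hterm
  -- log of the product
  have hlogP : Real.log (∏ j ∈ Ioc 0 N,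
      (Real.Gamma (j:ℝ) * Real.Gamma ((j:ℝ) + 2*k) / Real.Gamma ((j:ℝ)+k)^2)) =
      (N:ℝ) * c0 k + ((N:ℝ) * (∑ i ∈ Ioc 0 N, gfun k i) -
        ∑ i ∈ Ioc 0 N, (i:ℝ) * gfun k i) := by
    rw [prod_eq hk N]
    rw [Real.log_mul (pow_ne_zero _ hc.ne') (Finset.prod_ne_zero_iff.mpr
      (fun i hi => pow_ne_zero _ (pfun_pos hk (mem_Ioc.mp hi).1).ne'))]
    rw [Real.log_pow]
    rw [Real.log_prod (fun i hi => pow_ne_zero _ (pfun_pos hk (mem_Ioc.mp hi).1).ne')]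
    have hstep : ∀ i ∈ Ioc 0 N, Real.log ((pfun k i)^(N-i)) = ((N:ℝ) - (i:ℝ)) * gfun k i := by
      intro i hi
      rw [Real.log_pow, log_pfun hk (mem_Ioc.mp hi).1, Nat.cast_sub (mem_Ioc.mp hi).2]
    rw [Finset.sum_congr rfl hstep]
    have hc0 : Real.log (Real.Gamma (1+2*k)/Real.Gamma (1+k)^2) = c0 k := by
      rw [Real.log_div hG2.ne' (pow_ne_zero _ hG1.ne'), Real.log_pow, c0]
      push_cast
      ring
    rw [hc0]
    have hsplit : ∑ i ∈ Ioc 0 N, ((N:ℝ) - (i:ℝ)) * gfun k i =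
        (N:ℝ)*(∑ i ∈ Ioc 0 N, gfun k i) - ∑ i ∈ Ioc 0 N, (i:ℝ) * gfun k i := by
      rw [Finset.mul_sum, ← Finset.sum_sub_distrib]
      exact Finset.sum_congr rfl (fun i _ => by ring)
    rw [hsplit]
  -- Σ i g in terms of ff and harmonic
  have hig : ∑ i ∈ Ioc 0 N, (i:ℝ) * gfun k i =
      (∑ i ∈ Ioc 0 N, ffun (2*k) i) - 2*(∑ i ∈ Ioc 0 N, ffun k i) -
        k^2 * ((harmonic N : ℚ) : ℝ) := by
    rw [Finset.sum_congr rfl (fun i hi => ig_eq hk (mem_Ioc.mp hi).1)]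
    rw [harmonic_cast]
    rw [Finset.sum_sub_distrib, Finset.sum_sub_distrib, ← Finset.mul_sum]
    congr 1
    rw [Finset.mul_sum]
    apply Finset.sum_congr rfl
    intro i hi
    rw [div_eq_mul_one_div]
  -- final identity
  rw [Real.rpow_def_of_pos hN0]
  rw [show Real.log (N:ℝ) * k^2 = k^2 * Real.log (N:ℝ) by ring]
  rw [← Real.exp_log hPpos, ← Real.exp_sub]
  congr 1
  rw [hlogP, hig]
  ring
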